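/- Let p be an odd prime and let f₀, f₁, f₂ ∈ ℤ_p be such that f₀ is a unit of ℤ_p that is not a square in ℤ_p, f₁ ∈ pℤ_p, and f₂ ∈ pℤ_p but f₂ ∉ p²ℤ_p. Then there exist no x₀, y₀, z₀ ∈ ℚ_p with (x₀,y₀) ≠ (0,0) and z₀² = f₀x₀² + f₁x₀y₀ + f₂y₀²; i.e., the binary quadratic form f(x,y) = f₀x² + f₁xy + f₂y² does not represent any nonzero square over ℚ_p. -/

import Mathlib

section aux

variable {p : ℕ} [Fact p.Prime]

private lemma pv_inj {m n : ℤ} (h : (p : ℝ) ^ m = (p : ℝ) ^ n) : m = n := by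
  have hp : 1 < (p : ℝ) := by exact_mod_cast (Fact.out : p.Prime).one_lt
  exact zpow_right_injective₀ (by linarith) (by linarith) h

private lemma val_eq_of_norm_eq {a b : ℚ_[p]} (ha : a ≠ 0) (hb : b ≠ 0)
    (h : ‖a‖ = ‖b‖) : a.valuation = b.valuation := by
  rw [Padic.norm_eq_zpow_neg_valuation ha, Padic.norm_eq_zpow_neg_valuation hb] at h
  have := pv_inj h
  omega

private lemma val_neg (b : ℚ_[p]) (hb : b ≠ 0) : (-b).valuation = b.valuation :=
  val_eq_of_norm_eq (neg_ne_zero.2 hb) hb (norm_neg b)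

private lemma val_add (a b : ℚ_[p]) (ha : a ≠ 0)
    (hlt : b ≠ 0 → a.valuation < b.valuation) :
    a + b ≠ 0 ∧ (a + b).valuation = a.valuation := by
  by_cases hb : b = 0
  · subst hb; simp [ha]
  have hvb := hlt hb
  have hab : a + b ≠ 0 := by
    intro h
    have hba : b = -a := by linear_combination h
    rw [hba, val_neg a ha] at hvb
    exact lt_irrefl _ hvb
  refine ⟨hab, le_antisymm ?_ ?_⟩
  · have key : min (a + b).valuation (-b).valuation ≤ (a + b + -b).valuation :=
      Padic.le_valuation_add (by simpa using ha)
    rw [add_neg_cancel_right, val_neg b hb] at key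
    rcases le_or_gt (a + b).valuation b.valuation with h' | h'
    · rwa [min_eq_left h'] at key
    · rw [min_eq_right h'.le] at key; linarith
  · have h1 := Padic.le_valuation_add (x := a) (y := b) hab
    rw [min_eq_left hvb.le] at h1
    exact h1

private lemma val_unit_coe (u : ℤ_[p]) (h : IsUnit u) :
    Padic.valuation (u : ℚ_[p]) = 0 := by
  have hn : ‖u‖ = 1 := PadicInt.isUnit_iff.mp h
  have hu0 : (u : ℚ_[p]) ≠ 0 := by
    simp only [ne_eq, PadicInt.coe_eq_zero]
    intro h0; rw [h0] at hn; simp at hn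
  have hn' : ‖(u : ℚ_[p])‖ = 1 := by rw [← PadicInt.norm_def]; exact hn
  rw [Padic.norm_eq_zpow_neg_valuation hu0] at hn'
  have := pv_inj (m := -(u : ℚ_[p]).valuation) (n := 0) (by rw [zpow_zero]; exact hn')
  omega

private lemma two_unit (hp2 : p ≠ 2) : ‖(2 : ℤ_[p])‖ = 1 := by
  have hnd : ¬ ((p : ℤ) ∣ (2 : ℤ)) := by
    intro h
    have hp := (Fact.out : p.Prime).two_le
    have := Int.le_of_dvd (by norm_num) h
    omega
  have h2 : ((2 : ℤ) : ℤ_[p]) = (2 : ℤ_[p]) := by push_cast; ring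
  rcases lt_or_eq_of_le (PadicInt.norm_le_one (2 : ℤ_[p])) with h | h
  · rw [← h2, PadicInt.norm_int_lt_one_iff_dvd] at h
    exact absurd h hnd
  · exact h

/-- Hensel: a unit congruent to a square mod p is a square (p odd). -/
private lemma sq_of_approx (hp2 : p ≠ 2) (u w : ℤ_[p]) (hw : ‖w‖ = 1)
    (hd : (p : ℤ_[p]) ∣ w ^ 2 - u) : ∃ v : ℤ_[p], u = v ^ 2 := by
  set F : Polynomial ℤ_[p] := Polynomial.X ^ 2 - Polynomial.C u with hF
  have hev : F.eval w = w ^ 2 - u := by simp [hF]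
  have hder : F.derivative.eval w = 2 * w := by
    simp [hF, Polynomial.derivative_X_pow]; norm_num
  have hnorm : ‖F.eval w‖ < ‖F.derivative.eval w‖ ^ 2 := by
    rw [hev, hder, norm_mul, two_unit hp2, hw]
    norm_num
    exact (PadicInt.norm_lt_one_iff_dvd _).mpr hd
  obtain ⟨z, hz, -⟩ := hensels_lemma hnorm
  refine ⟨z, ?_⟩
  have : z ^ 2 - u = 0 := by rw [← hz]; simp [hF]
  exact (sub_eq_zero.mp this).symm

end aux

/-- Let `p` be an odd prime and let `f₀, f₁, f₂ ∈ ℤ_p` with `f₀` a non-square unit,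
`p ∣ f₁`, and `p ∣ f₂` but `p² ∤ f₂`. Then the binary quadratic form
`f₀x² + f₁xy + f₂y²` represents no nonzero square over `ℚ_p`. -/
theorem quadratic_form_represents_no_square (p : ℕ) [Fact p.Prime] (hp2 : p ≠ 2)
    (f₀ f₁ f₂ : ℤ_[p]) (hunit : IsUnit f₀) (hns : ¬ ∃ v : ℤ_[p], f₀ = v ^ 2)
    (h1 : (p : ℤ_[p]) ∣ f₁) (h2 : (p : ℤ_[p]) ∣ f₂) (h2' : ¬ (p : ℤ_[p]) ^ 2 ∣ f₂) :
    ¬ ∃ x y z : ℚ_[p], (x, y) ≠ (0, 0) ∧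
      z ^ 2 = (f₀ : ℚ_[p]) * x ^ 2 + (f₁ : ℚ_[p]) * x * y + (f₂ : ℚ_[p]) * y ^ 2 := by
  rintro ⟨x, y, z, hne, heq⟩
  have hppos : (0:ℕ) < p := (Fact.out : p.Prime).pos
  have hpZ : (p : ℤ_[p]) ≠ 0 := Nat.cast_ne_zero.mpr hppos.ne'
  have hpQ : (p : ℚ_[p]) ≠ 0 := Nat.cast_ne_zero.mpr hppos.ne'
  -- f₂ = p * c with c a unit
  obtain ⟨c, hc⟩ := h2
  have hcu : IsUnit c := by
    by_contra hcu
    have hlt : ‖c‖ < 1 := PadicInt.not_isUnit_iff.mp hcu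
    rw [PadicInt.norm_lt_one_iff_dvd] at hlt
    obtain ⟨d, hd⟩ := hlt
    exact h2' ⟨d, by rw [hc, hd]; ring⟩
  have hc0 : c ≠ 0 := by rintro rfl; simp at hcu
  have hf2ne : f₂ ≠ 0 := by rw [hc]; exact mul_ne_zero hpZ hc0
  have hf2Q : (f₂ : ℚ_[p]) ≠ 0 := by simpa [PadicInt.coe_eq_zero] using hf2ne
  have hf2val : Padic.valuation (f₂ : ℚ_[p]) = 1 := by
    have : (f₂ : ℚ_[p]) = (p : ℚ_[p]) * (c : ℚ_[p]) := by rw [hc]; push_cast; ring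
    rw [this, Padic.valuation_mul hpQ
      (by simpa [PadicInt.coe_eq_zero] using hc0)]
    rw [Padic.valuation_p, val_unit_coe c hcu]
    norm_num
  have hf0Q : (f₀ : ℚ_[p]) ≠ 0 := by
    simp only [ne_eq, PadicInt.coe_eq_zero]
    intro h0; rw [h0] at hunit; simp at hunit
  have hf0val : Padic.valuation (f₀ : ℚ_[p]) = 0 := val_unit_coe f₀ hunit
  by_cases hx0 : x = 0
  · -- x = 0: parity contradiction
    have hy0 : y ≠ 0 := by
      intro h; exact hne (by rw [hx0, h])
    rw [hx0] at heq
    simp only [mul_zero, zero_pow, zero_add, zero_mul, add_zero] at heq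
    have heq' : z ^ 2 = (f₂ : ℚ_[p]) * y ^ 2 := by
      rw [heq]; ring
    have hrhs : (f₂ : ℚ_[p]) * y ^ 2 ≠ 0 := mul_ne_zero hf2Q (pow_ne_zero _ hy0)
    have hz0 : z ≠ 0 := by
      intro h; rw [h] at heq'; simp at heq'; tauto
    have hv1 : Padic.valuation (z ^ 2) = 2 * z.valuation := by
      rw [sq, Padic.valuation_mul hz0 hz0]; ring
    have hv2 : Padic.valuation ((f₂ : ℚ_[p]) * y ^ 2) = 1 + 2 * y.valuation := by
      rw [Padic.valuation_mul hf2Q (pow_ne_zero _ hy0), hf2val, sq,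
        Padic.valuation_mul hy0 hy0]; ring
    rw [heq', hv2] at hv1
    omega
  · by_cases hyx : ‖y‖ ≤ ‖x‖
    · -- residue case: divide by x²
      set t : ℚ_[p] := y / x with htdef
      set w : ℚ_[p] := z / x with hwdef
      have hxn : (0:ℝ) < ‖x‖ := norm_pos_iff.mpr hx0
      have ht1 : ‖t‖ ≤ 1 := by
        rw [htdef, norm_div, div_le_one hxn]; exact hyx
      have hw : w ^ 2 = (f₀ : ℚ_[p]) + (f₁ : ℚ_[p]) * t + (f₂ : ℚ_[p]) * t ^ 2 := by
        rw [hwdef, htdef]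
        field_simp
        linear_combination heq
      have hf1n : ‖(f₁ : ℚ_[p])‖ < 1 := by
        rw [← PadicInt.norm_def]; exact (PadicInt.norm_lt_one_iff_dvd _).mpr h1
      have hf2n : ‖(f₂ : ℚ_[p])‖ < 1 := by
        rw [← PadicInt.norm_def]; exact (PadicInt.norm_lt_one_iff_dvd _).mpr ⟨c, hc⟩
      set s : ℚ_[p] := (f₁ : ℚ_[p]) * t + (f₂ : ℚ_[p]) * t ^ 2 with hs
      have hsn : ‖s‖ < 1 := by
        rw [hs]
        refine lt_of_le_of_lt (Padic.nonarchimedean _ _) ?_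
        apply max_lt
        · calc ‖(f₁ : ℚ_[p]) * t‖ = ‖(f₁ : ℚ_[p])‖ * ‖t‖ := by rw [norm_mul]
            _ ≤ ‖(f₁ : ℚ_[p])‖ * 1 := by
                exact mul_le_mul_of_nonneg_left ht1 (norm_nonneg _)
            _ < 1 := by simpa using hf1n
        · calc ‖(f₂ : ℚ_[p]) * t ^ 2‖ = ‖(f₂ : ℚ_[p])‖ * ‖t‖ ^ 2 := by
                rw [norm_mul, norm_pow]
            _ ≤ ‖(f₂ : ℚ_[p])‖ * 1 := by
                refine mul_le_mul_of_nonneg_left ?_ (norm_nonneg _)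
                exact pow_le_one₀ (norm_nonneg _) ht1
            _ < 1 := by simpa using hf2n
      have hf0n : ‖(f₀ : ℚ_[p])‖ = 1 := by
        rw [← PadicInt.norm_def]; exact PadicInt.isUnit_iff.mp hunit
      have hwsq : ‖w‖ ^ 2 = 1 := by
        have heqw : w ^ 2 = (f₀ : ℚ_[p]) + s := by rw [hw, hs]; ring
        have h1' : ‖w ^ 2‖ = 1 := by
          rw [heqw]
          have hle := le_trans (Padic.nonarchimedean (f₀ : ℚ_[p]) s)
            (max_le hf0n.le hsn.le)
          have h' := Padic.nonarchimedean ((f₀ : ℚ_[p]) + s) (-s)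
          rw [add_neg_cancel_right, norm_neg, hf0n] at h'
          rcases le_max_iff.mp h' with h'' | h''
          · linarith
          · linarith
        rw [← norm_pow]; exact h1'
      have hwn : ‖w‖ = 1 := by
        have h0 : (0:ℝ) ≤ ‖w‖ := norm_nonneg _
        nlinarith [hwsq]
      -- lift to ℤ_[p]
      set W : ℤ_[p] := ⟨w, hwn.le⟩ with hW
      set T : ℤ_[p] := ⟨t, ht1⟩ with hT
      have hWT : W ^ 2 = f₀ + f₁ * T + f₂ * T ^ 2 := by
        apply Subtype.coe_injective
        push_cast
        exact hw
      have hdvd : (p : ℤ_[p]) ∣ W ^ 2 - f₀ := by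
        have : W ^ 2 - f₀ = f₁ * T + f₂ * T ^ 2 := by rw [hWT]; ring
        rw [this]
        exact dvd_add (h1.mul_right T)
          ((show (p : ℤ_[p]) ∣ f₂ from ⟨c, hc⟩).mul_right (T ^ 2))
      have hWnorm : ‖W‖ = 1 := by
        rw [PadicInt.norm_def]; exact hwn
      exact hns (sq_of_approx hp2 f₀ W hWnorm hdvd)
    · -- ‖x‖ < ‖y‖ : parity contradiction
      push_neg at hyx
      have hy0 : y ≠ 0 := by
        intro h; rw [h] at hyx; simp at hyx
        exact absurd (norm_nonneg x) (not_le.mpr hyx)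
      have hvxy : y.valuation < x.valuation := by
        rw [Padic.norm_eq_zpow_neg_valuation hx0, Padic.norm_eq_zpow_neg_valuation hy0] at hyx
        have hp1 : 1 < (p : ℝ) := by exact_mod_cast (Fact.out : p.Prime).one_lt
        have := (zpow_lt_zpow_iff_right₀ hp1).mp hyx
        omega
      set A : ℚ_[p] := (f₂ : ℚ_[p]) * y ^ 2 with hA
      set B : ℚ_[p] := (f₁ : ℚ_[p]) * x * y with hB
      set C0 : ℚ_[p] := (f₀ : ℚ_[p]) * x ^ 2 with hC0
      have hAne : A ≠ 0 := mul_ne_zero hf2Q (pow_ne_zero _ hy0)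
      have hAval : A.valuation = 1 + 2 * y.valuation := by
        rw [hA, Padic.valuation_mul hf2Q (pow_ne_zero _ hy0), hf2val, sq,
          Padic.valuation_mul hy0 hy0]; ring
      have hC0ne : C0 ≠ 0 := mul_ne_zero hf0Q (pow_ne_zero _ hx0)
      have hC0val : C0.valuation = 2 * x.valuation := by
        rw [hC0, Padic.valuation_mul hf0Q (pow_ne_zero _ hx0), hf0val, sq,
          Padic.valuation_mul hx0 hx0]; ring
      have hBval : B ≠ 0 → A.valuation < B.valuation := by
        intro hBne
        have hf1Q : (f₁ : ℚ_[p]) ≠ 0 := by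
          intro h; rw [hB, h] at hBne; simp at hBne
        have hf1ne : f₁ ≠ 0 := by
          intro h; rw [h] at hf1Q; simp at hf1Q
        obtain ⟨d, hd⟩ := h1
        have hd0 : d ≠ 0 := by intro h; rw [h, mul_zero] at hd; exact hf1ne hd
        have hdQ : (d : ℚ_[p]) ≠ 0 := by simpa [PadicInt.coe_eq_zero] using hd0
        have hf1val : 1 ≤ Padic.valuation (f₁ : ℚ_[p]) := by
          have : (f₁ : ℚ_[p]) = (p : ℚ_[p]) * (d : ℚ_[p]) := by rw [hd]; push_cast; ring
          rw [this, Padic.valuation_mul hpQ hdQ, Padic.valuation_p]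
          have : (0:ℤ) ≤ PadicInt.valuation d := by positivity
          have hdd : (PadicInt.valuation d : ℤ) = Padic.valuation (d : ℚ_[p]) := (PadicInt.valuation_coe d).symm
          omega
        have : B.valuation = Padic.valuation (f₁ : ℚ_[p]) + x.valuation + y.valuation := by
          rw [hB, Padic.valuation_mul (mul_ne_zero hf1Q hx0) hy0,
            Padic.valuation_mul hf1Q hx0]
        rw [this, hAval]
        omega
      obtain ⟨hABne, hABval⟩ := val_add A B hAne hBval
      have hC0big : C0 ≠ 0 → (A + B).valuation < C0.valuation := by
        intro _
        rw [hABval, hAval, hC0val]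
        omega
      obtain ⟨htot, htotval⟩ := val_add (A + B) C0 hABne hC0big
      have heq' : z ^ 2 = (A + B) + C0 := by rw [heq, hA, hB, hC0]; ring
      have hz0 : z ≠ 0 := by
        intro h; rw [h] at heq'; simp at heq'; exact htot heq'.symm
      have : Padic.valuation (z ^ 2) = 2 * z.valuation := by
        rw [sq, Padic.valuation_mul hz0 hz0]; ring
      rw [heq', htotval, hABval, hAval] at this
      omega
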